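/- Let 0 < s < t and c > 0. Then the second moment of the Brownian meander transition density satisfies ∫₀^∞ x² · (φ_{t-s}(c - x) − φ_{t-s}(c + x)) · (x t^{3/2} / (c s^{3/2})) · exp(-x²/(2s)) · exp(c²/(2t)) dx = 3 s (t − s) / t + c² s² / t². -/

import Mathlib

open Real MeasureTheory Set

lemma int_pow_gauss {b : ℝ} (hb : 0 < b) (k : ℕ) :
    Integrable (fun x : ℝ => x ^ k * Real.exp (-(b * x ^ 2))) := by
  have h := integrable_rpow_mul_exp_neg_mul_sq hb
    (s := (k : ℝ)) (lt_of_lt_of_le neg_one_lt_zero (Nat.cast_nonneg k))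
  simpa [Real.rpow_natCast, neg_mul] using h

lemma int_oddk (b : ℝ) {k : ℕ} (hk : Odd k) :
    ∫ x : ℝ, x ^ k * Real.exp (-(b * x ^ 2)) = 0 := by
  have h := MeasureTheory.integral_neg_eq_self
    (fun x : ℝ => x ^ k * Real.exp (-(b * x ^ 2))) volume
  simp only [hk.neg_pow, neg_sq, neg_mul, integral_neg] at h
  linarith

lemma int0 (b : ℝ) : ∫ x : ℝ, Real.exp (-(b * x ^ 2)) = Real.sqrt (π / b) := by
  simpa [neg_mul] using integral_gaussian b

lemma int2 {b : ℝ} (hb : 0 < b) :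
    ∫ x : ℝ, x ^ 2 * Real.exp (-(b * x ^ 2)) = b ^ (-(3:ℝ)/2) * Real.sqrt π / 2 := by
  have h := integral_comp_abs (f := fun x : ℝ => x ^ 2 * Real.exp (-(b * x ^ 2)))
  simp only [sq_abs] at h
  rw [h]
  have h2 := integral_rpow_mul_exp_neg_mul_rpow (p := 2) (q := 2) (b := b)
    two_pos (by norm_num) hb
  rw [show ((2:ℝ)+1)/2 = 1/2 + 1 by norm_num, Real.Gamma_add_one (by norm_num),
    Real.Gamma_one_half_eq] at h2
  have h3 : ∫ x in Ioi (0:ℝ), x ^ 2 * Real.exp (-(b * x ^ 2))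
      = ∫ x in Ioi (0:ℝ), x ^ (2:ℝ) * Real.exp (-b * x ^ (2:ℝ)) := by
    congr 1; funext x; rw [Real.rpow_two, neg_mul]
  rw [h3, h2, show (-((2:ℝ)+1)/2) = -(3:ℝ)/2 by norm_num]
  ring

lemma expand_cube (b m : ℝ) :
    (fun y : ℝ => (y + m) ^ 3 * Real.exp (-(b * y ^ 2)))
      = fun y : ℝ => y ^ 3 * Real.exp (-(b * y ^ 2))
        + (3*m) * (y ^ 2 * Real.exp (-(b * y ^ 2)))
        + (3*m^2) * (y ^ 1 * Real.exp (-(b * y ^ 2)))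
        + m^3 * (y ^ 0 * Real.exp (-(b * y ^ 2))) := by
  funext y; ring

lemma integrable_cube_shift {b : ℝ} (hb : 0 < b) (m : ℝ) :
    Integrable (fun x : ℝ => x ^ 3 * Real.exp (-(b * (x - m) ^ 2))) := by
  have h : Integrable (fun y : ℝ => (y + m) ^ 3 * Real.exp (-(b * y ^ 2))) := by
    rw [expand_cube]
    exact (((int_pow_gauss hb 3).add ((int_pow_gauss hb 2).const_mul (3*m))).add
      ((int_pow_gauss hb 1).const_mul (3*m^2))).add ((int_pow_gauss hb 0).const_mul (m^3))
  have h2 := h.comp_sub_right m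
  simpa [sub_add_cancel] using h2

lemma int_cube_shift {b : ℝ} (hb : 0 < b) (m : ℝ) :
    ∫ x : ℝ, x ^ 3 * Real.exp (-(b * (x - m) ^ 2))
      = 3*m*(b ^ (-(3:ℝ)/2) * Real.sqrt π / 2) + m^3 * Real.sqrt (π / b) := by
  have key := MeasureTheory.integral_sub_right_eq_self
    (fun y : ℝ => (y + m) ^ 3 * Real.exp (-(b * y ^ 2))) m (μ := volume)
  have e1 : ∫ x : ℝ, x ^ 3 * Real.exp (-(b * (x - m) ^ 2))
      = ∫ y : ℝ, (y + m) ^ 3 * Real.exp (-(b * y ^ 2)) := by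
    rw [← key]; congr 1; funext x; rw [sub_add_cancel]
  rw [e1, expand_cube]
  have A3 := int_pow_gauss hb 3
  have A2 : Integrable (fun y : ℝ => (3*m) * (y ^ 2 * Real.exp (-(b * y ^ 2)))) :=
    (int_pow_gauss hb 2).const_mul (3*m)
  have A1 : Integrable (fun y : ℝ => (3*m^2) * (y ^ 1 * Real.exp (-(b * y ^ 2)))) :=
    (int_pow_gauss hb 1).const_mul (3*m^2)
  have A0 : Integrable (fun y : ℝ => m^3 * (y ^ 0 * Real.exp (-(b * y ^ 2)))) :=
    (int_pow_gauss hb 0).const_mul (m^3)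
  have A32 : Integrable (fun y : ℝ => y ^ 3 * Real.exp (-(b * y ^ 2))
      + (3*m) * (y ^ 2 * Real.exp (-(b * y ^ 2)))) := A3.add A2
  have A321 : Integrable (fun y : ℝ => y ^ 3 * Real.exp (-(b * y ^ 2))
      + (3*m) * (y ^ 2 * Real.exp (-(b * y ^ 2)))
      + (3*m^2) * (y ^ 1 * Real.exp (-(b * y ^ 2)))) := A32.add A1
  rw [integral_add A321 A0, integral_add A32 A1, integral_add A3 A2,
      integral_const_mul, integral_const_mul, integral_const_mul]
  rw [int_oddk b (by decide : Odd 3)]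
  have h1 : ∫ x : ℝ, x ^ 1 * Real.exp (-(b * x ^ 2)) = 0 := int_oddk b (by decide)
  have h0 : ∫ x : ℝ, x ^ 0 * Real.exp (-(b * x ^ 2)) = Real.sqrt (π / b) := by
    simpa using int0 b
  rw [h1, h0, int2 hb]
  ring

lemma rpow_three_halves {x : ℝ} (hx : 0 < x) : x ^ ((3:ℝ)/2) = x * Real.sqrt x := by
  rw [show (3:ℝ)/2 = 1 + 1/2 by norm_num, Real.rpow_add hx, Real.rpow_one, Real.sqrt_eq_rpow]

/-- Centered Gaussian density with variance `σ`. -/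
noncomputable def phi (σ x : ℝ) : ℝ := (Real.sqrt (2 * π * σ))⁻¹ * Real.exp (-x ^ 2 / (2 * σ))

theorem stmt9 (s t c : ℝ) (hs : 0 < s) (hst : s < t) (hc : 0 < c) :
    ∫ x in Ioi (0 : ℝ),
        x ^ 2 * ((phi (t - s) (c - x) - phi (t - s) (c + x)) *
          (x * t ^ ((3 : ℝ) / 2) / (c * s ^ ((3 : ℝ) / 2))) *
          Real.exp (-x ^ 2 / (2 * s)) * Real.exp (c ^ 2 / (2 * t))) =
      3 * s * (t - s) / t + c ^ 2 * s ^ 2 / t ^ 2 := by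
  have ht : 0 < t := hs.trans hst
  have hu : 0 < t - s := sub_pos.mpr hst
  set u := t - s with hu_def
  set b := t / (2 * s * u) with hb_def
  have hb : 0 < b := by rw [hb_def]; positivity
  set m := c * s / t with hm_def
  have hm : 0 < m := by rw [hm_def]; positivity
  have hpt : ∀ x : ℝ,
      x ^ 2 * ((phi u (c - x) - phi u (c + x)) *
          (x * t ^ ((3 : ℝ) / 2) / (c * s ^ ((3 : ℝ) / 2))) *
          Real.exp (-x ^ 2 / (2 * s)) * Real.exp (c ^ 2 / (2 * t)))
        = (Real.sqrt (2 * π * u))⁻¹ * (t ^ ((3 : ℝ) / 2) / (c * s ^ ((3 : ℝ) / 2))) *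
            (x ^ 3 * Real.exp (-(b * (x - m) ^ 2))
              + (-x) ^ 3 * Real.exp (-(b * (-x - m) ^ 2))) := by
    intro x
    have h1 : Real.exp (-(c - x) ^ 2 / (2 * u)) * Real.exp (-x ^ 2 / (2 * s))
        * Real.exp (c ^ 2 / (2 * t)) = Real.exp (-(b * (x - m) ^ 2)) := by
      rw [← Real.exp_add, ← Real.exp_add]
      congr 1
      rw [hb_def, hm_def, hu_def]
      field_simp [show t - s ≠ 0 from hu.ne']
      ring
    have h2 : Real.exp (-(c + x) ^ 2 / (2 * u)) * Real.exp (-x ^ 2 / (2 * s))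
        * Real.exp (c ^ 2 / (2 * t)) = Real.exp (-(b * (-x - m) ^ 2)) := by
      rw [← Real.exp_add, ← Real.exp_add]
      congr 1
      rw [hb_def, hm_def, hu_def]
      field_simp [show t - s ≠ 0 from hu.ne']
      ring
    simp only [phi]
    linear_combination
      (x ^ 3 * (t ^ ((3 : ℝ) / 2) / (c * s ^ ((3 : ℝ) / 2))) * (Real.sqrt (2 * π * u))⁻¹) * h1
      - (x ^ 3 * (t ^ ((3 : ℝ) / 2) / (c * s ^ ((3 : ℝ) / 2))) * (Real.sqrt (2 * π * u))⁻¹) * h2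
  have hgint := integrable_cube_shift hb m
  have hI1 : IntegrableOn (fun x : ℝ => x ^ 3 * Real.exp (-(b * (x - m) ^ 2))) (Ioi 0) :=
    hgint.integrableOn
  have hI2 : IntegrableOn
      (fun x : ℝ => (-x) ^ 3 * Real.exp (-(b * (-x - m) ^ 2))) (Ioi 0) :=
    (hgint.comp_neg).integrableOn
  calc
    ∫ x in Ioi (0 : ℝ),
        x ^ 2 * ((phi u (c - x) - phi u (c + x)) *
          (x * t ^ ((3 : ℝ) / 2) / (c * s ^ ((3 : ℝ) / 2))) *
          Real.exp (-x ^ 2 / (2 * s)) * Real.exp (c ^ 2 / (2 * t)))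
      = ∫ x in Ioi (0 : ℝ),
          (Real.sqrt (2 * π * u))⁻¹ * (t ^ ((3 : ℝ) / 2) / (c * s ^ ((3 : ℝ) / 2))) *
            (x ^ 3 * Real.exp (-(b * (x - m) ^ 2))
              + (-x) ^ 3 * Real.exp (-(b * (-x - m) ^ 2))) :=
        setIntegral_congr_fun measurableSet_Ioi (fun x _ => hpt x)
    _ = (Real.sqrt (2 * π * u))⁻¹ * (t ^ ((3 : ℝ) / 2) / (c * s ^ ((3 : ℝ) / 2))) *
          ∫ x in Ioi (0 : ℝ),
            (x ^ 3 * Real.exp (-(b * (x - m) ^ 2))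
              + (-x) ^ 3 * Real.exp (-(b * (-x - m) ^ 2))) := integral_const_mul _ _
    _ = (Real.sqrt (2 * π * u))⁻¹ * (t ^ ((3 : ℝ) / 2) / (c * s ^ ((3 : ℝ) / 2))) *
          ((∫ x in Ioi (0 : ℝ), x ^ 3 * Real.exp (-(b * (x - m) ^ 2)))
            + ∫ x in Ioi (0 : ℝ), (-x) ^ 3 * Real.exp (-(b * (-x - m) ^ 2))) := by
        rw [integral_add hI1 hI2]
    _ = (Real.sqrt (2 * π * u))⁻¹ * (t ^ ((3 : ℝ) / 2) / (c * s ^ ((3 : ℝ) / 2))) *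
          ((∫ x in Ioi (0 : ℝ), x ^ 3 * Real.exp (-(b * (x - m) ^ 2)))
            + ∫ x in Iic (0 : ℝ), x ^ 3 * Real.exp (-(b * (x - m) ^ 2))) := by
        rw [integral_comp_neg_Ioi (0 : ℝ)
          (fun y : ℝ => y ^ 3 * Real.exp (-(b * (y - m) ^ 2))), neg_zero]
    _ = (Real.sqrt (2 * π * u))⁻¹ * (t ^ ((3 : ℝ) / 2) / (c * s ^ ((3 : ℝ) / 2))) *
          ∫ x : ℝ, x ^ 3 * Real.exp (-(b * (x - m) ^ 2)) := by
        rw [add_comm, intervalIntegral.integral_Iic_add_Ioi hgint.integrableOn hgint.integrableOn]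
    _ = (Real.sqrt (2 * π * u))⁻¹ * (t ^ ((3 : ℝ) / 2) / (c * s ^ ((3 : ℝ) / 2))) *
          (3*m*(b ^ (-(3:ℝ)/2) * Real.sqrt π / 2) + m^3 * Real.sqrt (π / b)) := by
        rw [int_cube_shift hb m]
    _ = 3 * s * u / t + c ^ 2 * s ^ 2 / t ^ 2 := by
        have hbinv : b⁻¹ = 2 * s * u / t := by rw [hb_def, inv_div]
        have e2 : t ^ ((3:ℝ)/2) = t * Real.sqrt t := rpow_three_halves ht
        have e3 : s ^ ((3:ℝ)/2) = s * Real.sqrt s := rpow_three_halves hs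
        have esq : Real.sqrt (2 * s * u / t)
            = Real.sqrt 2 * Real.sqrt s * Real.sqrt u / Real.sqrt t := by
          rw [Real.sqrt_div (by positivity), Real.sqrt_mul (by positivity),
            Real.sqrt_mul (by norm_num)]
        have e4 : b ^ (-(3:ℝ)/2)
            = (2 * s * u / t) * (Real.sqrt 2 * Real.sqrt s * Real.sqrt u / Real.sqrt t) := by
          rw [show (-(3:ℝ)/2) = -((3:ℝ)/2) by norm_num, Real.rpow_neg hb.le,
            ← Real.inv_rpow hb.le, hbinv, rpow_three_halves (by positivity), esq]
        have e5 : Real.sqrt (π / b)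
            = Real.sqrt π * (Real.sqrt 2 * Real.sqrt s * Real.sqrt u / Real.sqrt t) := by
          rw [div_eq_mul_inv, hbinv, Real.sqrt_mul pi_pos.le, esq]
        have e6 : Real.sqrt (2 * π * u) = Real.sqrt 2 * Real.sqrt π * Real.sqrt u := by
          rw [Real.sqrt_mul (by positivity), Real.sqrt_mul (by norm_num)]
        rw [e2, e3, e4, e5, e6, hm_def]
        have n1 : Real.sqrt 2 ≠ 0 := by positivity
        have n2 : Real.sqrt π ≠ 0 := by positivity
        have n3 : Real.sqrt s ≠ 0 := by positivity
        have n4 : Real.sqrt u ≠ 0 := by positivity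
        have n5 : Real.sqrt t ≠ 0 := by positivity
        field_simp
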